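/- Let a > 0 and b > 0 satisfy 4ab < 1, let t₀ ≥ 0, and let E : [t₀,∞) → ℝ be a continuous function such that 0 ≤ E(t) and E(t) ≤ a + b·E(t)² for every t ≥ t₀. If E(t₀) ≤ 2a, then E(t) ≤ (1 − √(1 − 4ab))/(2b) ≤ 2a for every t ≥ t₀. -/

import Mathlib

/-- Continuation argument for a continuous nonnegative function with a
quadratic self-bound `E ≤ a + b E²` starting below the smaller root. -/
theorem quadratic_bootstrap
    (a b t₀ : ℝ) (ha : 0 < a) (hb : 0 < b) (hab : 4 * a * b < 1) (ht₀ : 0 ≤ t₀)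
    (E : ℝ → ℝ)
    (hE_cont : ContinuousOn E (Set.Ici t₀))
    (hE_nonneg : ∀ t ∈ Set.Ici t₀, 0 ≤ E t)
    (hE_bound : ∀ t ∈ Set.Ici t₀, E t ≤ a + b * (E t) ^ 2)
    (hE_init : E t₀ ≤ 2 * a) :
    (1 - Real.sqrt (1 - 4 * a * b)) / (2 * b) ≤ 2 * a ∧
      ∀ t ∈ Set.Ici t₀, E t ≤ (1 - Real.sqrt (1 - 4 * a * b)) / (2 * b) := by
  set s := Real.sqrt (1 - 4 * a * b) with hs_def
  have h1 : (0:ℝ) < 1 - 4 * a * b := by linarith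
  have hs_sq : s ^ 2 = 1 - 4 * a * b := Real.sq_sqrt h1.le
  have hs_pos : 0 < s := Real.sqrt_pos.mpr h1
  have hs_lt1 : s < 1 := by nlinarith [mul_pos ha hb]
  have h2b : (0:ℝ) < 2 * b := by positivity
  have hrlo_le : (1 - s) / (2 * b) ≤ 2 * a := by
    rw [div_le_iff₀ h2b]; nlinarith
  refine ⟨hrlo_le, ?_⟩
  have hdich : ∀ t ∈ Set.Ici t₀,
      E t ≤ (1 - s) / (2 * b) ∨ (1 + s) / (2 * b) ≤ E t := by
    intro t ht
    have hbd := hE_bound t ht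
    by_contra hcon
    push_neg at hcon
    obtain ⟨h1', h2'⟩ := hcon
    rw [div_lt_iff₀ h2b] at h1'
    rw [lt_div_iff₀ h2b] at h2'
    nlinarith
  have hm1 : (1 - s) / (2 * b) < 1 / (2 * b) :=
    (div_lt_div_iff_of_pos_right h2b).mpr (by linarith)
  have hm2 : 1 / (2 * b) < (1 + s) / (2 * b) :=
    (div_lt_div_iff_of_pos_right h2b).mpr (by linarith)
  have h2a_lt : 2 * a < (1 + s) / (2 * b) := by
    rw [lt_div_iff₀ h2b]; nlinarith
  have hconn : IsPreconnected (E '' Set.Ici t₀) :=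
    isPreconnected_Ici.image E hE_cont
  have hsub : E '' Set.Ici t₀ ⊆ Set.Iio (1 / (2 * b)) ∪ Set.Ioi (1 / (2 * b)) := by
    rintro _ ⟨t, ht, rfl⟩
    rcases hdich t ht with h | h
    · exact Or.inl (lt_of_le_of_lt h hm1)
    · exact Or.inr (lt_of_lt_of_le hm2 h)
  have hdisj : Disjoint (Set.Iio (1 / (2 * b))) (Set.Ioi (1 / (2 * b))) :=
    Set.disjoint_left.mpr fun x hx hy => (lt_asymm (Set.mem_Iio.mp hx) (Set.mem_Ioi.mp hy)).elim
  have hE0 : E t₀ < 1 / (2 * b) := by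
    rcases hdich t₀ (le_refl t₀) with h | h
    · exact lt_of_le_of_lt h hm1
    · linarith
  have hne : ((E '' Set.Ici t₀) ∩ Set.Iio (1 / (2 * b))).Nonempty :=
    ⟨E t₀, ⟨t₀, le_refl t₀, rfl⟩, hE0⟩
  have hfinal : E '' Set.Ici t₀ ⊆ Set.Iio (1 / (2 * b)) :=
    hconn.subset_left_of_subset_union isOpen_Iio isOpen_Ioi hdisj hsub hne
  intro t ht
  rcases hdich t ht with h | h
  · exact h
  · have : E t < 1 / (2 * b) := hfinal ⟨t, ht, rfl⟩
    linarith
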